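/- Consider the Ishii system on ℝ³: ẋ = y, ẏ = z, ż = 12xy, i.e. f(x,y,z) = (y, z, 12xy). Let (x',y',z') be defined by the Kahan equations (x'-x)/h = (y+y')/2, (y'-y)/h = (z+z')/2, (z'-z)/h = 6(xy' + x'y). Then H̃₁ = z - 6x² + (3/2)h²y² and H̃₂ = xz - (1/2)y² - 4x³ + h²(xy² + z²/24) are both preserved: H̃₁(x',y',z') = H̃₁(x,y,z) and H̃₂(x',y',z') = H̃₂(x,y,z). -/
import Mathlib

/-- The Kahan discretization of the Ishii system
`ẋ = y, ẏ = z, ż = 12xy` exactly preserves the modified invariants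
`H̃₁ = z - 6x² + (3/2)h²y²` and `H̃₂ = xz - (1/2)y² - 4x³ + h²(xy² + z²/24)`. -/
theorem kahan_ishii_invariants (h x y z x' y' z' : ℝ) (hh : h ≠ 0)
    (e₁ : (x' - x) / h = (y + y') / 2)
    (e₂ : (y' - y) / h = (z + z') / 2)
    (e₃ : (z' - z) / h = 6 * (x * y' + x' * y)) :
    (z' - 6 * x'^2 + (3/2) * h^2 * y'^2 = z - 6 * x^2 + (3/2) * h^2 * y^2) ∧
    (x' * z' - (1/2) * y'^2 - 4 * x'^3 + h^2 * (x' * y'^2 + z'^2 / 24) =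
      x * z - (1/2) * y^2 - 4 * x^3 + h^2 * (x * y^2 + z^2 / 24)) := by
  rw [div_eq_iff hh] at e₁ e₂ e₃
  constructor
  · linear_combination (-6*x' - 6*x - 3*h*y' + 3*h*y) * e₁ + e₃
  · linear_combination
      (-4*x'^2 + z - 4*x*x' - 4*x^2 - 2*h*x'*y' + 4*h*y*x' + 2*h*x*y' + 2*h*x*y
        - (1/2)*h^2*y*y' + (1/2)*h^2*y^2 + (1/2)*h^3*y*z + (3/2)*h^4*y^2*x'
        + (3/2)*h^4*x*y*y') * e₁
      + (-(1/2)*y' - (1/2)*y - (1/2)*h^2*x*y' - (1/2)*h^2*x*y - (1/4)*h^3*y*y'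
        - (1/4)*h^3*y^2) * e₂
      + (x' - (1/4)*h*y' - (1/4)*h*y + (1/24)*h^2*z' + (1/24)*h^2*z + (1/4)*h^3*y*x'
        - (1/4)*h^3*x*y - (1/8)*h^4*y*y' - (1/8)*h^4*y^2) * e₃
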